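/- arXiv:2101.02687 — 6 statements merged into one kernel-verified Lean document; each statement's English description precedes it below -/
import Mathlib

section
/- A future-directed causal curve in Minkowski space-time contained in a causal diamond has finite Euclidean length: if c : [a,b] → 𝕄 is a future-directed causal curve whose image lies in J⁺(x) ∩ J⁻(y), then the Euclidean length of c is at most √2 · (t(y) − t(x)). -/
noncomputable section

open Set Filter

/-- Minkowski space-time `𝕄 = ℝ × EuclideanSpace ℝ (Fin 3)`, equipped with the Euclidean
norm `‖(t,x)‖ = √(t² + ‖x‖²)` (i.e. the `L²` product norm). -/
abbrev Mink : Type := WithLp 2 (ℝ × EuclideanSpace ℝ (Fin 3))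

/-- The future causal cone `C = {(t,x) : ‖x‖ ≤ t}`. -/
def causalCone : Set Mink := {p | ‖p.ofLp.2‖ ≤ p.ofLp.1}

/-- The future chronological cone `C° = {(t,x) : ‖x‖ < t}` (the interior of `C`). -/
def chronCone : Set Mink := {p | ‖p.ofLp.2‖ < p.ofLp.1}

/-- `causalLE x y` (written `x ≤ y`): `x` causally precedes `y`, i.e. `y - x ∈ C`. -/
def causalLE (x y : Mink) : Prop := y - x ∈ causalCone

/-- `chronLT x y` (written `x ≪ y`): `x` chronologically precedes `y`, i.e. `y - x ∈ C°`. -/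
def chronLT (x y : Mink) : Prop := y - x ∈ chronCone

/-- The chronological past `I⁻(x) = {z : z ≪ x}`. -/
def Iminus (x : Mink) : Set Mink := {z | chronLT z x}

/-- The causal past `J⁻(x) = {z : z ≤ x}`. -/
def Jminus (x : Mink) : Set Mink := {z | causalLE z x}

/-- The causal future `J⁺(x) = {z : x ≤ z}`. -/
def Jplus (x : Mink) : Set Mink := {z | causalLE x z}

/-- A future-directed causal curve on an interval `I ⊆ ℝ`: a continuous map `c : I → 𝕄`
such that `c t - c s ∈ C` and `c s ≠ c t` whenever `s < t` in `I`. -/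
def IsFDCausalOn (c : ℝ → Mink) (I : Set ℝ) : Prop :=
  ContinuousOn c I ∧ ∀ s ∈ I, ∀ t ∈ I, s < t → c t - c s ∈ causalCone ∧ c s ≠ c t

/-- A future-directed causal curve contained in a causal diamond `J⁺(x) ∩ J⁻(y)` has
Euclidean length at most `√2 · (t(y) − t(x))`. -/
theorem minkowski_causal_curve_in_diamond_finite_length (a b : ℝ) (hab : a ≤ b)
    (x y : Mink) (c : ℝ → Mink) (hc : IsFDCausalOn c (Set.Icc a b))
    (him : ∀ s ∈ Set.Icc a b, c s ∈ Jplus x ∩ Jminus y) :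
    eVariationOn c (Set.Icc a b) ≤ ENNReal.ofReal (Real.sqrt 2 * (y.ofLp.1 - x.ofLp.1)) := by
  classical
  have sqrt2_nonneg : (0:ℝ) ≤ Real.sqrt 2 := Real.sqrt_nonneg 2
  have hcone : ∀ p ∈ causalCone, ‖p‖ ≤ Real.sqrt 2 * p.ofLp.1 := by
    intro p hp
    have h2 : ‖p.ofLp.2‖ ≤ p.ofLp.1 := hp
    have h0 : 0 ≤ p.ofLp.1 := le_trans (norm_nonneg _) h2
    have hsq : ‖p‖ ^ 2 = ‖p.ofLp.1‖ ^ 2 + ‖p.ofLp.2‖ ^ 2 := WithLp.prod_norm_sq_eq_of_L2 p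
    have hle : ‖p‖ ^ 2 ≤ (Real.sqrt 2 * p.ofLp.1) ^ 2 := by
      rw [hsq, mul_pow, Real.sq_sqrt (by norm_num : (0:ℝ) ≤ 2)]
      have h3 : ‖p.ofLp.2‖ ^ 2 ≤ p.ofLp.1 ^ 2 := by nlinarith [norm_nonneg p.ofLp.2]
      have h1 : ‖p.ofLp.1‖ ^ 2 = p.ofLp.1 ^ 2 := by rw [Real.norm_eq_abs, sq_abs]
      linarith
    calc ‖p‖ = Real.sqrt (‖p‖ ^ 2) := by rw [Real.sqrt_sq (norm_nonneg _)]
      _ ≤ Real.sqrt ((Real.sqrt 2 * p.ofLp.1) ^ 2) := Real.sqrt_le_sqrt hle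
      _ = Real.sqrt 2 * p.ofLp.1 := Real.sqrt_sq (by positivity)
  have hfst : ∀ u v : Mink, (u - v).ofLp.1 = u.ofLp.1 - v.ofLp.1 := fun u v => rfl
  have key : ∀ s ∈ Set.Icc a b, ∀ t ∈ Set.Icc a b, s ≤ t →
      edist (c t) (c s) ≤ ENNReal.ofReal (Real.sqrt 2 * ((c t).ofLp.1 - (c s).ofLp.1)) := by
    intro s hs t ht hst
    rcases eq_or_lt_of_le hst with rfl | hlt
    · simp
    · have hco := (hc.2 s hs t ht hlt).1
      have : edist (c t) (c s) = ENNReal.ofReal ‖c t - c s‖ := by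
        rw [edist_dist, dist_eq_norm]
      rw [this]
      apply ENNReal.ofReal_le_ofReal
      have := hcone _ hco
      rwa [hfst] at this
  have htime : ∀ s ∈ Set.Icc a b, ∀ t ∈ Set.Icc a b, s ≤ t → (c s).ofLp.1 ≤ (c t).ofLp.1 := by
    intro s hs t ht hst
    rcases eq_or_lt_of_le hst with rfl | hlt
    · exact le_refl _
    · have hco := (hc.2 s hs t ht hlt).1
      have h2 : ‖(c t - c s).ofLp.2‖ ≤ (c t - c s).ofLp.1 := hco
      have := le_trans (norm_nonneg _) h2
      rw [hfst] at this; linarith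
  rw [eVariationOn]
  apply iSup_le
  rintro ⟨n, u, hu, hus⟩
  dsimp only
  have hterm : ∀ i ∈ Finset.range n, edist (c (u (i + 1))) (c (u i)) ≤
      ENNReal.ofReal (Real.sqrt 2 * ((c (u (i+1))).ofLp.1 - (c (u i)).ofLp.1)) := by
    intro i _
    exact key _ (hus i) _ (hus (i+1)) (hu (Nat.le_succ i))
  calc ∑ i ∈ Finset.range n, edist (c (u (i + 1))) (c (u i))
      ≤ ∑ i ∈ Finset.range n, ENNReal.ofReal (Real.sqrt 2 * ((c (u (i+1))).ofLp.1 - (c (u i)).ofLp.1)) :=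
        Finset.sum_le_sum hterm
    _ = ENNReal.ofReal (∑ i ∈ Finset.range n, Real.sqrt 2 * ((c (u (i+1))).ofLp.1 - (c (u i)).ofLp.1)) := by
        rw [ENNReal.ofReal_sum_of_nonneg]
        intro i _
        have h := htime _ (hus i) _ (hus (i+1)) (hu (Nat.le_succ i))
        have : (0:ℝ) ≤ Real.sqrt 2 := Real.sqrt_nonneg 2
        nlinarith
    _ ≤ ENNReal.ofReal (Real.sqrt 2 * (y.ofLp.1 - x.ofLp.1)) := by
        apply ENNReal.ofReal_le_ofReal
        rw [← Finset.mul_sum]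
        rcases Nat.eq_zero_or_pos n with rfl | hn
        · simp
          have hax : x.ofLp.1 ≤ (c a).ofLp.1 := by
            have h := (him a (left_mem_Icc.mpr hab)).1
            have h2 : ‖(c a - x).ofLp.2‖ ≤ (c a - x).ofLp.1 := h
            have := le_trans (norm_nonneg _) h2
            rw [hfst] at this; linarith
          have hay : (c a).ofLp.1 ≤ y.ofLp.1 := by
            have h := (him a (left_mem_Icc.mpr hab)).2
            have h2 : ‖(y - c a).ofLp.2‖ ≤ (y - c a).ofLp.1 := h
            have := le_trans (norm_nonneg _) h2
            rw [hfst] at this; linarith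
          have e1 : WithLp.fst x = x.ofLp.1 := rfl
          have e2 : WithLp.fst y = y.ofLp.1 := rfl
          nlinarith
        · have hsum : ∑ i ∈ Finset.range n, ((c (u (i+1))).ofLp.1 - (c (u i)).ofLp.1)
              = (c (u n)).ofLp.1 - (c (u 0)).ofLp.1 := by
            exact Finset.sum_range_sub (fun i => (c (u i)).ofLp.1) n
          rw [hsum]
          have hx0 : x.ofLp.1 ≤ (c (u 0)).ofLp.1 := by
            have h := (him _ (hus 0)).1
            have h2 : ‖(c (u 0) - x).ofLp.2‖ ≤ (c (u 0) - x).ofLp.1 := h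
            have := le_trans (norm_nonneg _) h2
            rw [hfst] at this; linarith
          have hyn : (c (u n)).ofLp.1 ≤ y.ofLp.1 := by
            have h := (him _ (hus n)).2
            have h2 : ‖(y - c (u n)).ofLp.2‖ ≤ (y - c (u n)).ofLp.1 := h
            have := le_trans (norm_nonneg _) h2
            rw [hfst] at this; linarith
          nlinarith
end
end

section
/- Minkowski space-time is non-totally-imprisoning: if c : [0,∞) → 𝕄 is a future-directed causal curve parametrized by Euclidean arc length, then for every compact set K ⊆ 𝕄 there exists s₀ ≥ 0 such that c(s) ∉ K for all s ≥ s₀ (an endless causal curve cannot hover around in a compact set). -/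
noncomputable section

open Set Filter

lemma cone_fst_nonneg {p : Mink} (hp : p ∈ causalCone) : (0:ℝ) ≤ p.ofLp.1 :=
  le_trans (norm_nonneg _) hp

lemma cone_norm_le {p : Mink} (hp : p ∈ causalCone) : ‖p‖ ≤ Real.sqrt 2 * p.ofLp.1 := by
  have h1 : (0:ℝ) ≤ p.ofLp.1 := cone_fst_nonneg hp
  rw [WithLp.prod_norm_eq_of_L2, WithLp.fst, WithLp.snd]
  have hb : ‖p.ofLp.1‖ ^ 2 + ‖p.ofLp.2‖ ^ 2 ≤ 2 * p.ofLp.1 ^ 2 := by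
    have h2 : ‖p.ofLp.1‖ = |p.ofLp.1| := rfl
    have h3 : ‖p.ofLp.2‖ ≤ p.ofLp.1 := hp
    nlinarith [norm_nonneg p.ofLp.2, abs_of_nonneg h1]
  calc Real.sqrt (‖p.ofLp.1‖ ^ 2 + ‖p.ofLp.2‖ ^ 2) ≤ Real.sqrt (2 * p.ofLp.1 ^ 2) := Real.sqrt_le_sqrt hb
    _ = Real.sqrt 2 * p.ofLp.1 := by
        rw [Real.sqrt_mul (by norm_num), Real.sqrt_sq h1]

lemma fst_abs_le_norm (p : Mink) : |p.ofLp.1| ≤ ‖p‖ := by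
  rw [WithLp.prod_norm_eq_of_L2, WithLp.fst, WithLp.snd]
  have h : |p.ofLp.1| = Real.sqrt (‖p.ofLp.1‖ ^ 2) := by
    rw [Real.sqrt_sq (norm_nonneg _)]; exact (Real.norm_eq_abs _).symm
  rw [h]
  exact Real.sqrt_le_sqrt (by nlinarith [norm_nonneg p.ofLp.2])

lemma sub_fst (p q : Mink) : (p - q).ofLp.1 = p.ofLp.1 - q.ofLp.1 := rfl

/-- Minkowski space-time is non-totally-imprisoning: a future-directed causal curve
`c : [0,∞) → 𝕄` parametrized by Euclidean arc length eventually leaves every compact set. -/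
theorem minkowski_non_totally_imprisoning (c : ℝ → Mink)
    (hc : IsFDCausalOn c (Set.Ici 0))
    (harc : ∀ s : ℝ, 0 ≤ s → eVariationOn c (Set.Icc 0 s) = ENNReal.ofReal s) :
    ∀ K : Set Mink, IsCompact K → ∃ s₀ : ℝ, 0 ≤ s₀ ∧ ∀ s : ℝ, s₀ ≤ s → c s ∉ K := by
  intro K hK
  -- monotonicity of the time coordinate along the curve
  have hmono : ∀ a ∈ Set.Ici (0:ℝ), ∀ b ∈ Set.Ici (0:ℝ), a ≤ b → (c a).ofLp.1 ≤ (c b).ofLp.1 := by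
    intro a ha b hb hab
    rcases eq_or_lt_of_le hab with rfl | h
    · exact le_rfl
    · have := cone_fst_nonneg ((hc.2 a ha b hb h).1)
      rw [sub_fst] at this
      linarith
  -- key inequality : edist (c b) (c a) ≤ ofReal (√2 * ((c b).ofLp.1 - (c a).ofLp.1))
  have hedist : ∀ a ∈ Set.Ici (0:ℝ), ∀ b ∈ Set.Ici (0:ℝ), a ≤ b →
      edist (c b) (c a) ≤ ENNReal.ofReal (Real.sqrt 2 * ((c b).ofLp.1 - (c a).ofLp.1)) := by
    intro a ha b hb hab
    rcases eq_or_lt_of_le hab with rfl | h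
    · simp
    · have hcone := (hc.2 a ha b hb h).1
      have h1 := cone_norm_le hcone
      rw [sub_fst] at h1
      rw [edist_dist, dist_eq_norm]
      exact ENNReal.ofReal_le_ofReal h1
  -- the arc-length bound : s ≤ √2 * ((c s).ofLp.1 - (c 0).ofLp.1) for s ≥ 0
  have hkey : ∀ s : ℝ, 0 ≤ s → s ≤ Real.sqrt 2 * ((c s).ofLp.1 - (c 0).ofLp.1) := by
    intro s hs
    have hvar : eVariationOn c (Set.Icc 0 s) ≤
        ENNReal.ofReal (Real.sqrt 2 * ((c s).ofLp.1 - (c 0).ofLp.1)) := by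
      apply iSup_le
      rintro ⟨n, u, hu, hus⟩
      calc ∑ i ∈ Finset.range n, edist (c (u (i + 1))) (c (u i))
          ≤ ∑ i ∈ Finset.range n,
              ENNReal.ofReal (Real.sqrt 2 * ((c (u (i+1))).ofLp.1 - (c (u i)).ofLp.1)) := by
            apply Finset.sum_le_sum
            intro i _
            exact hedist (u i) (hus i).1 (u (i+1)) (hus (i+1)).1 (hu (Nat.le_succ i))
        _ = ENNReal.ofReal (∑ i ∈ Finset.range n,
              Real.sqrt 2 * ((c (u (i+1))).ofLp.1 - (c (u i)).ofLp.1)) := by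
            rw [ENNReal.ofReal_sum_of_nonneg]
            intro i _
            have h := hmono (u i) (hus i).1 (u (i+1)) (hus (i+1)).1 (hu (Nat.le_succ i))
            have h2 : (0:ℝ) ≤ Real.sqrt 2 := Real.sqrt_nonneg 2
            nlinarith
        _ ≤ ENNReal.ofReal (Real.sqrt 2 * ((c s).ofLp.1 - (c 0).ofLp.1)) := by
            apply ENNReal.ofReal_le_ofReal
            rw [← Finset.mul_sum, Finset.sum_range_sub (fun i => (c (u i)).ofLp.1)]
            have h1 : (c 0).ofLp.1 ≤ (c (u 0)).ofLp.1 :=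
              hmono 0 Set.self_mem_Ici (u 0) (hus 0).1 (hus 0).1
            have h2 : (c (u n)).ofLp.1 ≤ (c s).ofLp.1 :=
              hmono (u n) (hus n).1 s (Set.mem_Ici.mpr hs) (hus n).2
            have : (0:ℝ) ≤ Real.sqrt 2 := Real.sqrt_nonneg 2
            nlinarith
    rw [harc s hs] at hvar
    have hrn : 0 ≤ Real.sqrt 2 * ((c s).ofLp.1 - (c 0).ofLp.1) := by
      have := hmono 0 Set.self_mem_Ici s (Set.mem_Ici.mpr hs) hs
      have h2 : (0:ℝ) ≤ Real.sqrt 2 := Real.sqrt_nonneg 2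
      nlinarith
    exact (ENNReal.ofReal_le_ofReal_iff hrn).mp hvar
  -- bound the compact set
  obtain ⟨R, hR⟩ := hK.isBounded.subset_closedBall 0
  refine ⟨max 0 (Real.sqrt 2 * (R + 1 - (c 0).ofLp.1)), le_max_left _ _, ?_⟩
  intro s hs hsK
  have hs0 : (0:ℝ) ≤ s := le_trans (le_max_left _ _) hs
  have h1 : Real.sqrt 2 * (R + 1 - (c 0).ofLp.1) ≤ s := le_trans (le_max_right _ _) hs
  have h2 := hkey s hs0
  have hsqrt : (1:ℝ) < Real.sqrt 2 := by
    rw [show (1:ℝ) = Real.sqrt 1 by simp]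
    exact Real.sqrt_lt_sqrt (by norm_num) (by norm_num)
  have h3 : R + 1 ≤ (c s).ofLp.1 := by nlinarith
  have h4 : ‖c s‖ ≤ R := by
    have := hR hsK
    simpa [Metric.mem_closedBall, dist_zero_right] using this
  have h5 : |(c s).ofLp.1| ≤ ‖c s‖ := fst_abs_le_norm (c s)
  have := abs_le.mp h5
  linarith [this.1, this.2]
end
end

section
/- Minkowski space-time contains no locally naked singularities (the globally hyperbolic case of Penrose's Theorem on strong cosmic censorship, instantiated for Minkowski space): for every future-directed causal curve γ : [0,∞) → 𝕄 parametrized by Euclidean arc length (hence future-endless) and every point x ∈ 𝕄, the inclusion I⁻(γ) ⊆ I⁻(x) fails. -/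
noncomputable section

open Set Filter

lemma causal_fst_nonneg {p : Mink} (hp : p ∈ causalCone) : 0 ≤ p.ofLp.1 :=
  le_trans (norm_nonneg _) hp

lemma causal_norm_le {p : Mink} (hp : p ∈ causalCone) : ‖p‖ ≤ 2 * p.ofLp.1 := by
  have h1 : 0 ≤ p.ofLp.1 := causal_fst_nonneg hp
  have h2 : ‖p‖ ^ 2 = ‖p.ofLp.1‖ ^ 2 + ‖p.ofLp.2‖ ^ 2 := WithLp.prod_norm_sq_eq_of_L2 p
  have h3 : ‖p.ofLp.1‖ = p.ofLp.1 := by rw [Real.norm_eq_abs, abs_of_nonneg h1]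
  rw [h3] at h2
  have hp' : ‖p.ofLp.2‖ ≤ p.ofLp.1 := hp
  have h4 : ‖p‖ ^ 2 ≤ (2 * p.ofLp.1) ^ 2 := by
    nlinarith [mul_self_le_mul_self (norm_nonneg p.ofLp.2) hp']
  calc ‖p‖ = Real.sqrt (‖p‖ ^ 2) := by rw [Real.sqrt_sq (norm_nonneg p)]
    _ ≤ Real.sqrt ((2 * p.ofLp.1) ^ 2) := Real.sqrt_le_sqrt h4
    _ = 2 * p.ofLp.1 := Real.sqrt_sq (by linarith)

lemma fst_sub (a b : Mink) : (a - b).ofLp.1 = a.ofLp.1 - b.ofLp.1 := rfl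

/-- Minkowski space-time contains no locally naked singularities: for every
future-directed causal curve `γ : [0,∞) → 𝕄` parametrized by Euclidean arc length
(hence future-endless) and every point `x`, the inclusion `I⁻(γ) ⊆ I⁻(x)` fails. -/
theorem minkowski_no_locally_naked_singularities (γ : ℝ → Mink)
    (hγ : IsFDCausalOn γ (Set.Ici 0))
    (harc : ∀ s : ℝ, 0 ≤ s → eVariationOn γ (Set.Icc 0 s) = ENNReal.ofReal s) :
    ∀ x : Mink, ¬ (⋃ s ∈ Set.Ici (0 : ℝ), Iminus (γ s)) ⊆ Iminus x := by
  intro x hsub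
  -- time coordinate is monotone along the curve
  have hmono : ∀ a b : ℝ, 0 ≤ a → a ≤ b → (γ a).ofLp.1 ≤ (γ b).ofLp.1 := by
    intro a b ha hab
    rcases eq_or_lt_of_le hab with rfl | h
    · exact le_rfl
    · have := (hγ.2 a ha b (le_trans ha hab) h).1
      have := causal_fst_nonneg this
      rw [fst_sub] at this; linarith
  -- chord bound
  have hchord : ∀ a b : ℝ, 0 ≤ a → a ≤ b →
      edist (γ b) (γ a) ≤ ENNReal.ofReal (2 * ((γ b).ofLp.1 - (γ a).ofLp.1)) := by
    intro a b ha hab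
    rcases eq_or_lt_of_le hab with rfl | h
    · simp
    · have hc := (hγ.2 a ha b (le_trans ha hab) h).1
      rw [edist_dist, dist_eq_norm]
      refine ENNReal.ofReal_le_ofReal ?_
      have := causal_norm_le hc
      rwa [fst_sub] at this
  -- growth of the time coordinate
  have hgrow : ∀ s : ℝ, 0 ≤ s → s ≤ 2 * ((γ s).ofLp.1 - (γ 0).ofLp.1) := by
    intro s hs
    have hvar : eVariationOn γ (Set.Icc 0 s) ≤
        ENNReal.ofReal (2 * ((γ s).ofLp.1 - (γ 0).ofLp.1)) := by
      refine iSup_le ?_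
      rintro ⟨n, u, hu, us⟩
      calc ∑ i ∈ Finset.range n, edist (γ (u (i + 1))) (γ (u i))
          ≤ ∑ i ∈ Finset.range n,
              ENNReal.ofReal (2 * ((γ (u (i + 1))).ofLp.1 - (γ (u i)).ofLp.1)) := by
            refine Finset.sum_le_sum fun i _ => ?_
            exact hchord _ _ (us i).1 (hu (Nat.le_succ i))
        _ = ENNReal.ofReal (∑ i ∈ Finset.range n,
              2 * ((γ (u (i + 1))).ofLp.1 - (γ (u i)).ofLp.1)) := by
            rw [ENNReal.ofReal_sum_of_nonneg]
            intro i _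
            have := hmono (u i) (u (i + 1)) (us i).1 (hu (Nat.le_succ i))
            linarith
        _ ≤ ENNReal.ofReal (2 * ((γ s).ofLp.1 - (γ 0).ofLp.1)) := by
            refine ENNReal.ofReal_le_ofReal ?_
            rw [← Finset.mul_sum, Finset.sum_range_sub (fun i => (γ (u i)).ofLp.1)]
            have h1 : (γ (u n)).ofLp.1 ≤ (γ s).ofLp.1 := hmono _ _ (us n).1 (us n).2
            have h2 : (γ 0).ofLp.1 ≤ (γ (u 0)).ofLp.1 := hmono _ _ le_rfl (us 0).1
            linarith
    rw [harc s hs] at hvar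
    have hnn : 0 ≤ 2 * ((γ s).ofLp.1 - (γ 0).ofLp.1) := by
      have := hmono 0 s le_rfl hs; linarith
    exact (ENNReal.ofReal_le_ofReal_iff hnn).1 hvar
  -- choose a late parameter
  set s : ℝ := max 0 (2 * (x.ofLp.1 - (γ 0).ofLp.1) + 4) with hs_def
  have hs0 : 0 ≤ s := le_max_left _ _
  have hs1 : 2 * (x.ofLp.1 - (γ 0).ofLp.1) + 4 ≤ s := le_max_right _ _
  have hbig : x.ofLp.1 + 2 ≤ (γ s).ofLp.1 := by
    have := hgrow s hs0
    linarith
  -- the point z := γ s - (1,0)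
  set e : Mink := WithLp.toLp 2 ((1 : ℝ), (0 : EuclideanSpace ℝ (Fin 3))) with he
  set z : Mink := γ s - e with hz
  have hz_mem : z ∈ Iminus (γ s) := by
    show γ s - z ∈ chronCone
    have : γ s - z = e := by rw [hz]; abel
    rw [this]
    show ‖(0 : EuclideanSpace ℝ (Fin 3))‖ < (1 : ℝ)
    simp
  have hz_in : z ∈ ⋃ t ∈ Set.Ici (0 : ℝ), Iminus (γ t) := by
    exact Set.mem_biUnion hs0 hz_mem
  have hx := hsub hz_in
  have hx' : ‖(x - z).ofLp.2‖ < (x - z).ofLp.1 := hx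
  have hz1 : z.ofLp.1 = (γ s).ofLp.1 - 1 := by rw [hz, fst_sub]
  rw [fst_sub, hz1] at hx'
  have : (0 : ℝ) ≤ ‖(x - z).ofLp.2‖ := norm_nonneg _
  linarith
end
end

section
/- The hyperplane Σ = {p ∈ 𝕄 : t(p) = 0} is a Cauchy surface of Minkowski space-time: every future-directed causal curve c : ℝ → 𝕄 parametrized by Euclidean arc length (hence inextendible) meets Σ exactly once, i.e. there exists a unique s ∈ ℝ with t(c(s)) = 0. -/
noncomputable section

open Set Filter

/-- Norm bound on the causal cone: `‖p‖ ≤ √2 * p.1`. -/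
lemma aux_norm_le_sqrt_two_mul (p : Mink) (hp : p ∈ causalCone) :
    ‖p‖ ≤ Real.sqrt 2 * p.ofLp.1 := by
  have h0 : (0:ℝ) ≤ p.fst := le_trans (norm_nonneg _) hp
  rw [WithLp.prod_norm_eq_of_L2, show Real.sqrt 2 * p.ofLp.1 = Real.sqrt (2 * p.fst^2) by
    rw [Real.sqrt_mul (by norm_num), Real.sqrt_sq h0]; rfl]
  apply Real.sqrt_le_sqrt
  have h1 : ‖p.snd‖^2 ≤ p.fst^2 := by
    apply sq_le_sq' _ hp; linarith [norm_nonneg p.snd]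
  have h2 : ‖p.fst‖^2 = p.fst^2 := by rw [Real.norm_eq_abs, sq_abs]
  linarith

/-- The hyperplane `Σ = {t = 0}` is a Cauchy surface of Minkowski space-time: every
future-directed causal curve `c : ℝ → 𝕄` parametrized by Euclidean arc length (hence
inextendible) meets `Σ` exactly once. -/
theorem minkowski_t_zero_hyperplane_is_Cauchy (c : ℝ → Mink)
    (hc : IsFDCausalOn c Set.univ)
    (harc : ∀ a b : ℝ, a ≤ b → eVariationOn c (Set.Icc a b) = ENNReal.ofReal (b - a)) :
    ∃! s : ℝ, (c s).ofLp.1 = 0 := by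
  set f : ℝ → ℝ := fun s => (c s).ofLp.1 with hf
  -- f is strictly monotone
  have hmono : StrictMono f := by
    intro s t hst
    obtain ⟨hC, hne⟩ := hc.2 s trivial t trivial hst
    have h1 : ‖(c t - c s).ofLp.2‖ ≤ (c t - c s).ofLp.1 := hC
    have h0 : (0:ℝ) ≤ (c t - c s).ofLp.1 := le_trans (norm_nonneg _) h1
    rcases lt_or_eq_of_le h0 with h | h
    · have : (c t).ofLp.1 - (c s).ofLp.1 = (c t - c s).ofLp.1 := rfl
      simp only [hf]; linarith
    · exfalso
      apply hne
      have h2 : ‖(c t - c s).ofLp.2‖ ≤ 0 := by rw [← h] at h1; exact h1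
      have h3 : (c t - c s).ofLp.2 = 0 := norm_le_zero_iff.mp h2
      have h4 : c t - c s = 0 := WithLp.ofLp_injective 2
        (Prod.ext (show (c t - c s).ofLp.1 = (0:Mink).ofLp.1 from h.symm)
          (show (c t - c s).ofLp.2 = (0:Mink).ofLp.2 from h3))
      exact (sub_eq_zero.mp h4).symm
  have hfmono : Monotone f := hmono.monotone
  -- growth estimate
  have hgrow : ∀ a b : ℝ, a ≤ b → b - a ≤ Real.sqrt 2 * (f b - f a) := by
    intro a b hab
    have hbound : eVariationOn c (Set.Icc a b) ≤
        ENNReal.ofReal (Real.sqrt 2 * (f b - f a)) := by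
      rw [eVariationOn]
      apply iSup_le
      rintro ⟨n, u, hu, hus⟩
      calc ∑ i ∈ Finset.range n, edist (c (u (i + 1))) (c (u i))
          ≤ ∑ i ∈ Finset.range n, ENNReal.ofReal (Real.sqrt 2 * (f (u (i+1)) - f (u i))) := by
            apply Finset.sum_le_sum
            intro i _
            rw [edist_dist, dist_eq_norm]
            apply ENNReal.ofReal_le_ofReal
            have := aux_norm_le_sqrt_two_mul (c (u (i+1)) - c (u i))
              (by rcases lt_or_eq_of_le (hu (Nat.le_succ i)) with h | h
                  · exact (hc.2 (u i) trivial (u (i+1)) trivial h).1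
                  · rw [h]; simp [causalCone]
                  )
            simpa [hf] using this
        _ = ENNReal.ofReal (∑ i ∈ Finset.range n, Real.sqrt 2 * (f (u (i+1)) - f (u i))) := by
            rw [ENNReal.ofReal_sum_of_nonneg]
            intro i _
            have h1 : (0:ℝ) ≤ Real.sqrt 2 := Real.sqrt_nonneg 2
            have h2 := hfmono (hu (Nat.le_succ i))
            nlinarith
        _ ≤ ENNReal.ofReal (Real.sqrt 2 * (f b - f a)) := by
            apply ENNReal.ofReal_le_ofReal
            rw [← Finset.mul_sum, Finset.sum_range_sub (fun i => f (u i))]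
            have h1 : f a ≤ f (u 0) := hfmono (hus 0).1
            have h2 : f (u n) ≤ f b := hfmono (hus n).2
            have : (0:ℝ) ≤ Real.sqrt 2 := Real.sqrt_nonneg 2
            nlinarith
    rw [harc a b hab] at hbound
    have hrhs : 0 ≤ Real.sqrt 2 * (f b - f a) :=
      mul_nonneg (Real.sqrt_nonneg 2) (by linarith [hfmono hab])
    exact (ENNReal.ofReal_le_ofReal_iff hrhs).mp hbound
  -- continuity of f
  have hfc : Continuous f := by
    have hcc : Continuous c := continuousOn_univ.mp hc.1
    exact (continuous_fst.comp (WithLp.prod_continuous_ofLp 2 _ _)).comp hcc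
  -- existence via IVT
  set T : ℝ := Real.sqrt 2 * (|f 0| + 1) with hT
  have hs2 : (1:ℝ) ≤ Real.sqrt 2 := by
    rw [show (1:ℝ) = Real.sqrt 1 by simp]
    exact Real.sqrt_le_sqrt (by norm_num)
  have hTpos : 0 < T := by positivity
  have hfT : 0 < f T := by
    have := hgrow 0 T (le_of_lt hTpos)
    have h2 : Real.sqrt 2 * (|f 0| + 1) ≤ Real.sqrt 2 * (f T - f 0) := by
      rw [hT] at this; linarith
    have h3 : |f 0| + 1 ≤ f T - f 0 := le_of_mul_le_mul_left h2 (by positivity)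
    cases abs_cases (f 0) with
    | inl h => linarith [h.1]
    | inr h => linarith [h.1]
  have hfmT : f (-T) < 0 := by
    have := hgrow (-T) 0 (by linarith)
    have h2 : Real.sqrt 2 * (|f 0| + 1) ≤ Real.sqrt 2 * (f 0 - f (-T)) := by
      rw [hT] at this; linarith
    have h3 : |f 0| + 1 ≤ f 0 - f (-T) := le_of_mul_le_mul_left h2 (by positivity)
    cases abs_cases (f 0) with
    | inl h => linarith [h.1]
    | inr h => linarith [h.1]
  have hsub : Set.Icc (f (-T)) (f T) ⊆ f '' Set.Icc (-T) T :=
    intermediate_value_Icc (by linarith) hfc.continuousOn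
  obtain ⟨s, _, hs⟩ := hsub ⟨le_of_lt hfmT, le_of_lt hfT⟩
  exact ⟨s, hs, fun y hy => hmono.injective (show f y = f s from hy.trans hs.symm)⟩
end
end

section
/- Curve limit lemma in Minkowski space-time: let b_n → b in [0,∞), let c_n : [0,b_n] → 𝕄 be maps satisfying c_n(t) − c_n(s) ∈ C and ‖c_n(t) − c_n(s)‖ ≤ t − s for all 0 ≤ s ≤ t ≤ b_n (1-Lipschitz causal curves), and suppose c_n(0) → x in 𝕄. Then there exist a subsequence (c_{n_k}) and a 1-Lipschitz map c : [0,b] → 𝕄 with c(0) = x and c(t) − c(s) ∈ C for all 0 ≤ s ≤ t ≤ b, such that c_{n_k}(s_k) → c(s) whenever s_k ∈ [0,b_{n_k}] and s_k → s ∈ [0,b]. -/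
noncomputable section

open Set Filter

/-- Curve limit lemma in Minkowski space-time: given `bₙ → b` in `[0,∞)`, 1-Lipschitz
causal curves `cₙ : [0,bₙ] → 𝕄` with `cₙ 0 → x`, there are a subsequence and a 1-Lipschitz
causal limit curve `c : [0,b] → 𝕄` with `c 0 = x`, to which the subsequence converges
uniformly (expressed via convergence along arbitrary parameter sequences `sₖ → s`). -/
theorem minkowski_curve_limit_lemma (b : ℝ) (hb : 0 ≤ b) (bn : ℕ → ℝ)
    (hbn : ∀ n, 0 ≤ bn n) (hbnlim : Filter.Tendsto bn Filter.atTop (nhds b))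
    (x : Mink) (cn : ℕ → ℝ → Mink)
    (hcn : ∀ n, ∀ s t : ℝ, 0 ≤ s → s ≤ t → t ≤ bn n →
      cn n t - cn n s ∈ causalCone ∧ ‖cn n t - cn n s‖ ≤ t - s)
    (hx : Filter.Tendsto (fun n => cn n 0) Filter.atTop (nhds x)) :
    ∃ φ : ℕ → ℕ, StrictMono φ ∧ ∃ c : ℝ → Mink,
      c 0 = x ∧
      (∀ s t : ℝ, 0 ≤ s → s ≤ t → t ≤ b →
        c t - c s ∈ causalCone ∧ ‖c t - c s‖ ≤ t - s) ∧
      ∀ (sk : ℕ → ℝ) (s : ℝ), (∀ k, sk k ∈ Set.Icc 0 (bn (φ k))) →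
        Filter.Tendsto sk Filter.atTop (nhds s) → s ∈ Set.Icc 0 b →
        Filter.Tendsto (fun k => cn (φ k) (sk k)) Filter.atTop (nhds (c s)) := by
  classical
  -- clamped curves
  set cl : ℕ → ℝ → ℝ := fun n t => max (min t (bn n)) 0 with hcl
  set d : ℕ → ℝ → Mink := fun n t => cn n (cl n t) with hd
  have hcl0 : ∀ n, cl n 0 = 0 := fun n => by
    simp [hcl, min_eq_left (hbn n)]
  have hclmem : ∀ n t, 0 ≤ cl n t ∧ cl n t ≤ bn n := fun n t =>
    ⟨le_max_right _ _, max_le (min_le_right _ _) (hbn n)⟩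
  have hclmono : ∀ n, Monotone (cl n) := fun n =>
    (monotone_id.min monotone_const).max monotone_const
  have hclLip : ∀ n, LipschitzWith 1 (cl n) := fun n =>
    (LipschitzWith.id.min_const (bn n)).max_const 0
  have hclLip' : ∀ (n : ℕ) (s t : ℝ), |cl n t - cl n s| ≤ |t - s| := by
    intro n s t
    have := (hclLip n).dist_le_mul t s
    simpa [Real.dist_eq] using this
  have hdLip : ∀ n, ∀ s t : ℝ, s ≤ t →
      d n t - d n s ∈ causalCone ∧ ‖d n t - d n s‖ ≤ t - s := by
    intro n s t hst
    have h1 := (hclmem n s).1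
    have h2 := (hclmem n t).2
    have h3 : cl n s ≤ cl n t := hclmono n hst
    have h4 := hcn n (cl n s) (cl n t) h1 h3 h2
    refine ⟨h4.1, h4.2.trans ?_⟩
    have := hclLip' n s t
    rw [abs_of_nonneg (sub_nonneg.2 h3)] at this
    rwa [abs_of_nonneg (sub_nonneg.2 hst)] at this
  have hdLipAbs : ∀ n, ∀ s t : ℝ, ‖d n t - d n s‖ ≤ |t - s| := by
    intro n s t
    rcases le_total s t with h | h
    · exact (hdLip n s t h).2.trans (le_abs_self _)
    · rw [← norm_neg]
      simp only [neg_sub]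
      refine (hdLip n t s h).2.trans ?_
      rw [abs_sub_comm]; exact le_abs_self _
  have hd0 : ∀ n, d n 0 = cn n 0 := fun n => by rw [hd]; simp [hcl0 n]
  -- bound
  obtain ⟨M, hM⟩ : ∃ M : ℝ, ∀ n, ‖cn n 0‖ ≤ M := by
    obtain ⟨M, hM⟩ := (hx.norm).bddAbove_range
    exact ⟨M, fun n => hM ⟨n, rfl⟩⟩
  -- compactness extraction on rationals
  have hcomp : IsCompact (Set.pi Set.univ
      (fun q : ℚ => Metric.closedBall (0 : Mink) (M + |(q : ℝ)|))) :=
    isCompact_univ_pi fun q => isCompact_closedBall _ _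
  have hFmem : ∀ n, (fun q : ℚ => d n (q : ℝ)) ∈ Set.pi Set.univ
      (fun q : ℚ => Metric.closedBall (0 : Mink) (M + |(q : ℝ)|)) := by
    intro n q _
    rw [Metric.mem_closedBall, dist_zero_right]
    calc ‖d n (q : ℝ)‖ ≤ ‖d n (q : ℝ) - d n 0‖ + ‖d n 0‖ := by
          simpa using norm_add_le (d n (q:ℝ) - d n 0) (d n 0)
      _ ≤ |(q : ℝ) - 0| + M := by
          refine add_le_add (hdLipAbs n 0 (q:ℝ)) ?_
          rw [hd0]; exact hM n
      _ = M + |(q : ℝ)| := by rw [sub_zero]; ring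
  obtain ⟨G, -, φ, hφ, hFG⟩ := hcomp.tendsto_subseq hFmem
  have hGq : ∀ q : ℚ, Tendsto (fun k => d (φ k) (q : ℝ)) atTop (nhds (G q)) := by
    intro q
    exact (tendsto_pi_nhds.1 hFG) q
  -- pointwise convergence at all reals
  have hcauchy : ∀ t : ℝ, ∃ L, Tendsto (fun k => d (φ k) t) atTop (nhds L) := by
    intro t
    have hC : CauchySeq (fun k => d (φ k) t) := by
      rw [Metric.cauchySeq_iff]
      intro ε hε
      obtain ⟨q, hq⟩ := exists_rat_near t (by positivity : (0:ℝ) < ε / 4)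
      have hcq := (hGq q).cauchySeq
      rw [Metric.cauchySeq_iff] at hcq
      obtain ⟨N, hN⟩ := hcq (ε / 2) (by positivity)
      refine ⟨N, fun m hm l hl => ?_⟩
      have h1 : dist (d (φ m) t) (d (φ m) (q:ℝ)) < ε / 4 := by
        rw [dist_eq_norm]
        exact (hdLipAbs (φ m) (q:ℝ) t).trans_lt hq
      have h2 : dist (d (φ l) (q:ℝ)) (d (φ l) t) < ε / 4 := by
        rw [dist_eq_norm]
        exact (hdLipAbs (φ l) t (q:ℝ)).trans_lt (by rw [abs_sub_comm]; exact hq)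
      calc dist (d (φ m) t) (d (φ l) t)
          ≤ dist (d (φ m) t) (d (φ m) (q:ℝ)) + dist (d (φ m) (q:ℝ)) (d (φ l) (q:ℝ))
            + dist (d (φ l) (q:ℝ)) (d (φ l) t) := dist_triangle4 _ _ _ _
        _ < ε / 4 + ε / 2 + ε / 4 := by
            exact add_lt_add (add_lt_add h1 (hN m hm l hl)) h2
        _ = ε := by ring
    exact cauchySeq_tendsto_of_complete hC
  choose c hc using hcauchy
  refine ⟨φ, hφ, c, ?_, ?_, ?_⟩
  · -- c 0 = x
    have h1 : Tendsto (fun k => d (φ k) 0) atTop (nhds x) := by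
      simp only [hd0]
      exact hx.comp hφ.tendsto_atTop
    exact tendsto_nhds_unique (hc 0) h1
  · -- causal and Lipschitz
    intro s t hs hst htb
    have hsub : Tendsto (fun k => d (φ k) t - d (φ k) s) atTop (nhds (c t - c s)) :=
      (hc t).sub (hc s)
    constructor
    · have hclosed : IsClosed causalCone := by
        have he : Continuous (WithLp.prodContinuousLinearEquiv 2 ℝ ℝ
            (EuclideanSpace ℝ (Fin 3))) :=
          (WithLp.prodContinuousLinearEquiv 2 ℝ ℝ (EuclideanSpace ℝ (Fin 3))).continuous
        have h1 : Continuous fun p : Mink => p.ofLp.1 := by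
          have := continuous_fst.comp he
          exact this
        have h2 : Continuous fun p : Mink => ‖p.ofLp.2‖ := by
          have := continuous_norm.comp (continuous_snd.comp he)
          exact this
        exact isClosed_le h2 h1
      exact hclosed.mem_of_tendsto hsub
        (Filter.Eventually.of_forall fun k => (hdLip (φ k) s t hst).1)
    · have hnorm : Tendsto (fun k => ‖d (φ k) t - d (φ k) s‖) atTop (nhds ‖c t - c s‖) :=
        hsub.norm
      exact le_of_tendsto hnorm
        (Filter.Eventually.of_forall fun k => (hdLip (φ k) s t hst).2)
  · -- convergence along parameter sequences
    intro sk s hsk hsklim hs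
    have heq : ∀ k, cn (φ k) (sk k) = d (φ k) (sk k) := by
      intro k
      have h1 := (hsk k).1
      have h2 := (hsk k).2
      rw [hd]
      congr 1
      rw [hcl]
      simp only
      rw [min_eq_left h2, max_eq_left h1]
    simp only [heq]
    rw [tendsto_iff_dist_tendsto_zero]
    have key : ∀ k, dist (d (φ k) (sk k)) (c s) ≤ |sk k - s| + dist (d (φ k) s) (c s) := by
      intro k
      calc dist (d (φ k) (sk k)) (c s)
          ≤ dist (d (φ k) (sk k)) (d (φ k) s) + dist (d (φ k) s) (c s) := dist_triangle _ _ _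
        _ ≤ |sk k - s| + dist (d (φ k) s) (c s) := by
            refine add_le_add ?_ le_rfl
            rw [dist_eq_norm]
            exact (hdLipAbs (φ k) s (sk k)).trans le_rfl
    have hrhs : Tendsto (fun k => |sk k - s| + dist (d (φ k) s) (c s)) atTop (nhds 0) := by
      have h1 : Tendsto (fun k => |sk k - s|) atTop (nhds 0) := by
        have h0 : Tendsto (fun k => sk k - s) atTop (nhds (s - s)) :=
          hsklim.sub tendsto_const_nhds
        rw [sub_self] at h0
        simpa using h0.abs
      have h2 : Tendsto (fun k => dist (d (φ k) s) (c s)) atTop (nhds 0) :=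
        tendsto_iff_dist_tendsto_zero.1 (hc s)
      simpa using h1.add h2
    exact squeeze_zero (fun k => dist_nonneg) key hrhs
end
end

section
/- Every future-endless causal curve in Minkowski space-time defines an ideal point, i.e. a terminal indecomposable past set: if γ : [0,∞) → 𝕄 is a future-directed causal curve parametrized by Euclidean arc length, then I⁻(γ) is a nonempty open past set, and I⁻(γ) ≠ I⁻(x) for every point x ∈ 𝕄. -/
noncomputable section

open Set Filter

/-- A past set: `U ⊆ 𝕄` such that `z ∈ U` and `w ≪ z` imply `w ∈ U`. -/
def IsPastSet (U : Set Mink) : Prop := ∀ z ∈ U, ∀ w : Mink, chronLT w z → w ∈ U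

/-! ### Auxiliary lemmas -/

lemma norm_le_of_causal {p : Mink} (h : p ∈ causalCone) : ‖p‖ ≤ Real.sqrt 2 * p.ofLp.1 := by
  have h1 : 0 ≤ p.ofLp.1 := le_trans (norm_nonneg _) h
  have h2 : ‖p‖ ^ 2 = ‖p.ofLp.1‖ ^ 2 + ‖p.ofLp.2‖ ^ 2 := WithLp.prod_norm_sq_eq_of_L2 p
  rw [Real.norm_eq_abs, sq_abs] at h2
  have h4 : ‖p‖ ^ 2 ≤ 2 * p.ofLp.1 ^ 2 := by
    nlinarith [mul_self_le_mul_self (norm_nonneg p.ofLp.2) (show ‖p.ofLp.2‖ ≤ p.ofLp.1 from h)]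
  calc ‖p‖ = Real.sqrt (‖p‖ ^ 2) := (Real.sqrt_sq (norm_nonneg p)).symm
    _ ≤ Real.sqrt (2 * p.ofLp.1 ^ 2) := Real.sqrt_le_sqrt h4
    _ = Real.sqrt 2 * p.ofLp.1 := by
        rw [Real.sqrt_mul (by norm_num), Real.sqrt_sq h1]

lemma chronCone_open : IsOpen chronCone := by
  have hc : Continuous fun p : Mink => p.ofLp.1 - ‖p.ofLp.2‖ := by
    have h1 : Continuous fun p : Mink => p.ofLp.1 :=
      continuous_fst.comp (WithLp.prod_continuous_ofLp 2 ℝ (EuclideanSpace ℝ (Fin 3)))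
    have h2 : Continuous fun p : Mink => ‖p.ofLp.2‖ :=
      (continuous_snd.comp (WithLp.prod_continuous_ofLp 2 ℝ (EuclideanSpace ℝ (Fin 3)))).norm
    exact h1.sub h2
  have : chronCone = (fun p : Mink => p.ofLp.1 - ‖p.ofLp.2‖) ⁻¹' Set.Ioi 0 := by
    ext p; simp [chronCone, sub_pos]
  rw [this]; exact isOpen_Ioi.preimage hc

lemma iminus_open (x : Mink) : IsOpen (Iminus x) := by
  have : Iminus x = (fun w : Mink => x - w) ⁻¹' chronCone := rfl
  rw [this]
  exact chronCone_open.preimage (continuous_const.sub continuous_id)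

lemma chronLT_trans {w z y : Mink} (h1 : chronLT w z) (h2 : chronLT z y) : chronLT w y := by
  have h1' : ‖(z - w).ofLp.2‖ < (z - w).ofLp.1 := h1
  have h2' : ‖(y - z).ofLp.2‖ < (y - z).ofLp.1 := h2
  have hyw : y - w = (y - z) + (z - w) := by abel
  show ‖(y - w).ofLp.2‖ < (y - w).ofLp.1
  rw [hyw]
  calc ‖((y - z) + (z - w)).ofLp.2‖ ≤ ‖(y - z).ofLp.2‖ + ‖(z - w).ofLp.2‖ := norm_add_le _ _
    _ < (y - z).ofLp.1 + (z - w).ofLp.1 := by linarith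
    _ = ((y - z) + (z - w)).ofLp.1 := rfl

/-- The future-pointing timelike unit vector `(1, 0)`. -/
def unitT : Mink := (WithLp.equiv 2 (ℝ × EuclideanSpace ℝ (Fin 3))).symm (1, 0)

lemma unitT_fst : unitT.ofLp.1 = 1 := rfl

lemma chronLT_sub_unitT (x : Mink) : chronLT (x - unitT) x := by
  show ‖(x - (x - unitT)).ofLp.2‖ < (x - (x - unitT)).ofLp.1
  have : x - (x - unitT) = unitT := by abel
  rw [this]
  show ‖(0 : EuclideanSpace ℝ (Fin 3))‖ < 1
  simp

/-- Every future-endless causal curve in Minkowski space-time defines an ideal point,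
i.e. a terminal indecomposable past set: `I⁻(γ)` is a nonempty open past set not of the
form `I⁻(x)` for any point `x`. -/
theorem minkowski_endless_curve_gives_TIP (γ : ℝ → Mink)
    (hγ : IsFDCausalOn γ (Set.Ici 0))
    (harc : ∀ s : ℝ, 0 ≤ s → eVariationOn γ (Set.Icc 0 s) = ENNReal.ofReal s) :
    (⋃ s ∈ Set.Ici (0 : ℝ), Iminus (γ s)).Nonempty ∧
    IsOpen (⋃ s ∈ Set.Ici (0 : ℝ), Iminus (γ s)) ∧
    IsPastSet (⋃ s ∈ Set.Ici (0 : ℝ), Iminus (γ s)) ∧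
    ∀ x : Mink, (⋃ s ∈ Set.Ici (0 : ℝ), Iminus (γ s)) ≠ Iminus x := by
  obtain ⟨hcont, hcaus⟩ := hγ
  -- time coordinate is monotone along the curve
  have hmono : ∀ a ∈ Set.Ici (0 : ℝ), ∀ b ∈ Set.Ici (0 : ℝ), a ≤ b → (γ a).ofLp.1 ≤ (γ b).ofLp.1 := by
    intro a ha b hb hab
    rcases eq_or_lt_of_le hab with rfl | h
    · exact le_rfl
    · have hc := (hcaus a ha b hb h).1
      have : (0 : ℝ) ≤ (γ b - γ a).ofLp.1 := le_trans (norm_nonneg _) hc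
      have he : (γ b - γ a).ofLp.1 = (γ b).ofLp.1 - (γ a).ofLp.1 := rfl
      linarith [he ▸ this]
  -- growth of the time coordinate: s ≤ √2 * (t(γ s) - t(γ 0))
  have hgrow : ∀ s : ℝ, 0 ≤ s → s ≤ Real.sqrt 2 * ((γ s).ofLp.1 - (γ 0).ofLp.1) := by
    intro s hs
    have key : eVariationOn γ (Set.Icc 0 s)
        ≤ ENNReal.ofReal (Real.sqrt 2 * ((γ s).ofLp.1 - (γ 0).ofLp.1)) := by
      rw [eVariationOn]
      apply iSup_le
      rintro ⟨n, u, hu, hus⟩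
      have humem : ∀ i, u i ∈ Set.Ici (0 : ℝ) := fun i => (hus i).1
      have hmono' : ∀ i j : ℕ, i ≤ j → (γ (u i)).ofLp.1 ≤ (γ (u j)).ofLp.1 :=
        fun i j hij => hmono (u i) (humem i) (u j) (humem j) (hu hij)
      calc ∑ i ∈ Finset.range n, edist (γ (u (i + 1))) (γ (u i))
          ≤ ∑ i ∈ Finset.range n,
              ENNReal.ofReal (Real.sqrt 2 * (γ (u (i + 1))).ofLp.1 - Real.sqrt 2 * (γ (u i)).ofLp.1) := by
            apply Finset.sum_le_sum
            intro i _
            rw [edist_dist, dist_eq_norm]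
            apply ENNReal.ofReal_le_ofReal
            rcases eq_or_lt_of_le (hu (Nat.le_succ i)) with he | hl
            · rw [← he]; simp
            · have hc := (hcaus (u i) (humem i) (u (i + 1)) (humem (i + 1)) hl).1
              have := norm_le_of_causal hc
              have he2 : (γ (u (i + 1)) - γ (u i)).ofLp.1 = (γ (u (i + 1))).ofLp.1 - (γ (u i)).ofLp.1 := rfl
              rw [he2] at this
              linarith [this]
        _ = ENNReal.ofReal (∑ i ∈ Finset.range n,
              (Real.sqrt 2 * (γ (u (i + 1))).ofLp.1 - Real.sqrt 2 * (γ (u i)).ofLp.1)) := by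
            rw [ENNReal.ofReal_sum_of_nonneg]
            intro i _
            have := hmono' i (i + 1) (Nat.le_succ i)
            nlinarith [Real.sqrt_nonneg 2]
        _ = ENNReal.ofReal (Real.sqrt 2 * (γ (u n)).ofLp.1 - Real.sqrt 2 * (γ (u 0)).ofLp.1) := by
            rw [Finset.sum_range_sub (fun i => Real.sqrt 2 * (γ (u i)).ofLp.1)]
        _ ≤ ENNReal.ofReal (Real.sqrt 2 * ((γ s).ofLp.1 - (γ 0).ofLp.1)) := by
            apply ENNReal.ofReal_le_ofReal
            have h1 : (γ (u n)).ofLp.1 ≤ (γ s).ofLp.1 :=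
              hmono (u n) (humem n) s hs (hus n).2
            have h2 : (γ 0).ofLp.1 ≤ (γ (u 0)).ofLp.1 :=
              hmono 0 Set.self_mem_Ici (u 0) (humem 0) (humem 0)
            nlinarith [Real.sqrt_nonneg 2]
    rw [harc s hs] at key
    have hrhs : 0 ≤ Real.sqrt 2 * ((γ s).ofLp.1 - (γ 0).ofLp.1) := by
      have := hmono 0 Set.self_mem_Ici s hs hs
      nlinarith [Real.sqrt_nonneg 2]
    exact (ENNReal.ofReal_le_ofReal_iff hrhs).mp key
  have hmemU : ∀ s : ℝ, 0 ≤ s → γ s - unitT ∈ ⋃ s ∈ Set.Ici (0 : ℝ), Iminus (γ s) := by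
    intro s hs
    exact Set.mem_biUnion hs (chronLT_sub_unitT (γ s))
  refine ⟨⟨γ 0 - unitT, hmemU 0 le_rfl⟩, ?_, ?_, ?_⟩
  · exact isOpen_biUnion fun s _ => iminus_open (γ s)
  · intro z hz w hw
    obtain ⟨s, hs, hzs⟩ := Set.mem_iUnion₂.mp hz
    exact Set.mem_biUnion hs (chronLT_trans hw hzs)
  · intro x heq
    have hbound : ∀ s : ℝ, 0 ≤ s → (γ s).ofLp.1 < x.ofLp.1 + 1 := by
      intro s hs
      have hm : γ s - unitT ∈ Iminus x := heq ▸ hmemU s hs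
      have hlt : ‖(x - (γ s - unitT)).ofLp.2‖ < (x - (γ s - unitT)).ofLp.1 := hm
      have he : (x - (γ s - unitT)).ofLp.1 = x.ofLp.1 - ((γ s).ofLp.1 - unitT.ofLp.1) := rfl
      have h0 : (0 : ℝ) ≤ ‖(x - (γ s - unitT)).ofLp.2‖ := norm_nonneg _
      rw [he, unitT_fst] at hlt
      linarith
    set s := max 0 (Real.sqrt 2 * (x.ofLp.1 + 1 - (γ 0).ofLp.1)) with hsdef
    have hs0 : 0 ≤ s := le_max_left _ _
    have h1 : s ≤ Real.sqrt 2 * ((γ s).ofLp.1 - (γ 0).ofLp.1) := hgrow s hs0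
    have h2 : (γ s).ofLp.1 < x.ofLp.1 + 1 := hbound s hs0
    have h3 : Real.sqrt 2 * ((γ s).ofLp.1 - (γ 0).ofLp.1) < Real.sqrt 2 * (x.ofLp.1 + 1 - (γ 0).ofLp.1) := by
      have : (0 : ℝ) < Real.sqrt 2 := by positivity
      nlinarith
    have h4 : Real.sqrt 2 * (x.ofLp.1 + 1 - (γ 0).ofLp.1) ≤ s := le_max_right _ _
    linarith
end
end
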